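/- Suppose p is a prime with p > 3. Then the Poisson center S(𝔫)^𝔫 equals the F-subalgebra of F[x1,…,x6] generated by x1^p, x2^p, x3^p, x4^p, x5^p, x6 and c2. -/

import Mathlib

set_option synthInstance.maxHeartbeats 1000000
set_option maxHeartbeats 1000000

noncomputable section
open MvPolynomial

/-- The quotient ring `A[T]/(f)`. -/
abbrev PolyQuot (A : Type) [CommRing A] (f : Polynomial A) : Type :=
  Polynomial A ⧸ Ideal.span {f}

/-- The quotient ring `A[T_1, …, T_k]/(f_1, …, f_k)`. -/
abbrev MvPolyQuot (k : ℕ) (A : Type) [CommRing A] (f : Fin k → MvPolynomial (Fin k) A) : Type :=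
  MvPolynomial (Fin k) A ⧸ Ideal.span (Set.range f)

variable {F : Type} [Field F] {L : Type} [LieRing L] [LieAlgebra F L] {iv : Type}

/-- The unique `F`-linear derivation of the symmetric algebra `S(L) = F[iv]` (identified with
the polynomial ring via the basis `b`) extending `ad v = ⁅v, ·⁆`. -/
def Dv (b : Module.Basis iv F L) (v : L) :
    Derivation F (MvPolynomial iv F) (MvPolynomial iv F) :=
  MvPolynomial.mkDerivation F fun j =>
    ((b.repr ⁅v, b j⁆).sum fun k c => MvPolynomial.C c * MvPolynomial.X k)

/-- The Poisson center `{f ∈ S(L) | D_v f = 0 for all v ∈ L}`, as a subalgebra. -/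
def poissonCenter (b : Module.Basis iv F L) : Subalgebra F (MvPolynomial iv F) where
  carrier := {f | ∀ v : L, Dv b v f = 0}
  mul_mem' := by
    intro x y hx hy v
    rw [Derivation.leibniz, hx v, hy v, smul_zero, smul_zero, add_zero]
  add_mem' := by
    intro x y hx hy v
    rw [map_add, hx v, hy v, add_zero]
  algebraMap_mem' := by intro r v; simp [Dv]

/-- The set of Poisson semi-invariants of the symmetric algebra `S(L)`. -/
def semiSet (b : Module.Basis iv F L) : Set (MvPolynomial iv F) :=
  {f | ∃ lam : L →ₗ[F] F, ∀ v : L, Dv b v f = lam v • f}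

/-- The set of semi-invariants of the universal enveloping algebra `U(L)`. -/
def szSet (F L : Type) [Field F] [LieRing L] [LieAlgebra F L] :
    Set (UniversalEnvelopingAlgebra F L) :=
  {u | ∃ lam : L →ₗ[F] F, ∀ v : L,
    UniversalEnvelopingAlgebra.ι F v * u - u * UniversalEnvelopingAlgebra.ι F v = lam v • u}

def g2c1 (F : Type) [Field F] : MvPolynomial (Fin 6) F := X 5

def g2c2 (F : Type) [Field F] : MvPolynomial (Fin 6) F :=
  3 * X 0 * X 5 - 3 * X 1 * X 4 + X 2 ^ 2

def g2SpN (F : Type) [Field F] (p : ℕ) : Subalgebra F (MvPolynomial (Fin 6) F) :=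
  Algebra.adjoin F {X 0 ^ p, X 1 ^ p, X 2 ^ p, X 3 ^ p, X 4 ^ p, X 5}

def g2z1 (b : Module.Basis (Fin 6) F L) : UniversalEnvelopingAlgebra F L :=
  UniversalEnvelopingAlgebra.ι F (b 5)

def g2z2 (b : Module.Basis (Fin 6) F L) : UniversalEnvelopingAlgebra F L :=
  3 * (UniversalEnvelopingAlgebra.ι F (b 0) * UniversalEnvelopingAlgebra.ι F (b 5)) - 3 * (UniversalEnvelopingAlgebra.ι F (b 1) * UniversalEnvelopingAlgebra.ι F (b 4)) + UniversalEnvelopingAlgebra.ι F (b 2) ^ 2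

namespace G2Aux

variable {σ : Type} [DecidableEq σ] {R : Type} [CommRing R]

lemma coeff_pderiv (i : σ) (f : MvPolynomial σ R) (u : σ →₀ ℕ) :
    coeff u (pderiv i f) = ((u i + 1 : ℕ) : R) * coeff (u + Finsupp.single i 1) f := by
  induction f using MvPolynomial.induction_on' with
  | add p q hp hq => simp [hp, hq, mul_add]
  | monomial s a =>
    rw [pderiv_monomial, coeff_monomial, coeff_monomial]
    by_cases h : s = u + Finsupp.single i 1
    · subst h
      rw [if_pos (add_tsub_cancel_right _ _), if_pos rfl]
      simp [mul_comm]
    · rw [if_neg h, mul_zero]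
      by_cases h2 : s - Finsupp.single i 1 = u
      · rw [if_pos h2]
        have hsi : s i = 0 := by
          by_contra hs
          apply h
          ext j
          by_cases hj : j = i
          · subst hj
            simp only [← h2, Finsupp.add_apply, Finsupp.tsub_apply, Finsupp.single_eq_same]
            omega
          · simp [← h2, Finsupp.single_eq_of_ne' (Ne.symm hj)]
        simp [hsi]
      · rw [if_neg h2]


lemma coeff_pderiv_iterate (i : σ) (k : ℕ) (f : MvPolynomial σ R) (u : σ →₀ ℕ) :
    coeff u ((pderiv i)^[k] f) =
      ((∏ j ∈ Finset.range k, (u i + j + 1) : ℕ) : R) * coeff (u + Finsupp.single i k) f := by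
  induction k generalizing f with
  | zero => simp
  | succ k ih =>
    rw [Function.iterate_succ_apply, ih (pderiv i f), coeff_pderiv]
    have h1 : (u + Finsupp.single i k) i + 1 = u i + k + 1 := by
      simp [Finsupp.add_apply]
    have h2 : u + Finsupp.single i k + Finsupp.single i 1 = u + Finsupp.single i (k + 1) := by
      rw [add_assoc, ← Finsupp.single_add]
    rw [h1, h2, Finset.prod_range_succ]
    push_cast
    ring

lemma pderiv_iterate_char_eq_zero (p : ℕ) [CharP R p] (hp : 0 < p) (i : σ)
    (f : MvPolynomial σ R) : (pderiv i)^[p] f = 0 := by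
  ext u
  rw [coeff_pderiv_iterate, coeff_zero]
  have : ∃ j ∈ Finset.range p, ((u i + j + 1 : ℕ) : R) = 0 := by
    refine ⟨(p - 1 - (u i) % p) % p, Finset.mem_range.2 (Nat.mod_lt _ hp), ?_⟩
    rw [CharP.cast_eq_zero_iff R p]
    have h1 : u i % p < p := Nat.mod_lt _ hp
    have h2 : (p - 1 - (u i) % p) % p = p - 1 - (u i) % p := by
      apply Nat.mod_eq_of_lt; omega
    rw [h2]
    have := Nat.div_add_mod (u i) p
    refine ⟨u i / p + 1, by rw [Nat.mul_succ]; omega⟩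
  obtain ⟨j, hj, hj0⟩ := this
  rw [Nat.cast_prod, Finset.prod_eq_zero hj (by push_cast; push_cast at hj0; exact hj0), zero_mul]

lemma dvd_exp_of_pderiv_eq_zero [IsDomain R] (p : ℕ) [CharP R p] (i : σ) (f : MvPolynomial σ R)
    (h : pderiv i f = 0) (m : σ →₀ ℕ) (hm : m ∈ f.support) : p ∣ m i := by
  by_cases h0 : m i = 0
  · simp [h0]
  · have key := coeff_pderiv i f (m - Finsupp.single i 1)
    have hmm : m - Finsupp.single i 1 + Finsupp.single i 1 = m := by
      ext j
      by_cases hj : j = i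
      · subst hj; simp only [Finsupp.add_apply, Finsupp.tsub_apply, Finsupp.single_eq_same]; omega
      · simp [Finsupp.single_eq_of_ne' (Ne.symm hj)]
    rw [h, coeff_zero, hmm] at key
    have hc : coeff m f ≠ 0 := mem_support_iff.1 hm
    have hval : ((((m - Finsupp.single i 1 : σ →₀ ℕ)) i + 1 : ℕ) : R) = 0 := by
      rcases mul_eq_zero.1 key.symm with h' | h'
      · exact h'
      · exact absurd h' hc
    rw [CharP.cast_eq_zero_iff R p] at hval
    have : ((m - Finsupp.single i 1 : σ →₀ ℕ)) i + 1 = m i := by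
      simp only [Finsupp.tsub_apply, Finsupp.single_eq_same]; omega
    rwa [this] at hval

lemma pderiv_pderiv_comm (i j : σ) (f : MvPolynomial σ R) :
    pderiv i (pderiv j f) = pderiv j (pderiv i f) := by
  ext u
  rw [coeff_pderiv, coeff_pderiv, coeff_pderiv, coeff_pderiv]
  rw [add_assoc, add_assoc, add_comm (Finsupp.single i 1) (Finsupp.single j 1)]
  by_cases hij : i = j
  · subst hij; ring
  · have e1 : ((u + Finsupp.single i 1 : σ →₀ ℕ)) j = u j := by
      simp [Finsupp.add_apply, Finsupp.single_eq_of_ne' hij]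
    have e2 : ((u + Finsupp.single j 1 : σ →₀ ℕ)) i = u i := by
      simp [Finsupp.add_apply, Finsupp.single_eq_of_ne' (Ne.symm hij)]
    rw [e1, e2]
    ring

lemma pderiv_iterate_mul_left (i : σ) (g : MvPolynomial σ R) (hg : pderiv i g = 0) :
    ∀ (k : ℕ) (h : MvPolynomial σ R), (pderiv i)^[k] (g * h) = g * (pderiv i)^[k] h := by
  intro k
  induction k with
  | zero => intro h; simp
  | succ k ih =>
    intro h
    rw [Function.iterate_succ_apply, Function.iterate_succ_apply, pderiv_mul, hg, zero_mul,
      zero_add, ih]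

lemma X_dvd_of_coeff_zero (i : σ) (f : MvPolynomial σ R)
    (h : ∀ m : σ →₀ ℕ, m i = 0 → coeff m f = 0) : X i ∣ f := by
  rw [MvPolynomial.X_dvd_iff_modMonomial_eq_zero]
  ext u
  rw [coeff_zero]
  by_cases hu : Finsupp.single i 1 ≤ u
  · exact MvPolynomial.coeff_modMonomial_of_le f hu
  · rw [MvPolynomial.coeff_modMonomial_of_not_le f hu]
    apply h
    rw [Finsupp.single_le_iff] at hu
    omega

lemma sum_add_single (i : σ) (m : σ →₀ ℕ) (k : ℕ) :
    (m + Finsupp.single i k).sum (fun _ e => e) = m.sum (fun _ e => e) + k := by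
  rw [Finsupp.sum_add_index (by simp) (by intros; rfl), Finsupp.sum_single_index rfl]

lemma totalDegree_lt_X_mul (i : σ) (u : MvPolynomial σ R) (hu : u ≠ 0) :
    u.totalDegree < (X i * u).totalDegree := by
  have key : ∀ m ∈ u.support, (m.sum fun _ e => e) + 1 ≤ (X i * u).totalDegree := by
    intro m hm
    have hc : coeff (Finsupp.single i 1 + m) (X i * u) = coeff m u := coeff_X_mul m i u
    have hmem : Finsupp.single i 1 + m ∈ (X i * u).support := by
      rw [mem_support_iff, hc]; exact mem_support_iff.1 hm
    have hle := MvPolynomial.le_totalDegree hmem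
    rw [add_comm (Finsupp.single i 1) m] at hle
    rw [sum_add_single] at hle
    exact hle
  obtain ⟨m0, hm0⟩ := (MvPolynomial.support_nonempty.2 hu)
  have hpos : 0 < (X i * u).totalDegree := lt_of_lt_of_le (Nat.lt_succ_of_le (Nat.zero_le _)) (key m0 hm0)
  rw [MvPolynomial.totalDegree]
  rw [Finset.sup_lt_iff hpos]
  intro m hm
  exact lt_of_lt_of_le (Nat.lt_succ_self _) (key m hm)

lemma totalDegree_pderiv_le (i : σ) (f : MvPolynomial σ R) :
    (pderiv i f).totalDegree ≤ f.totalDegree := by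
  rw [MvPolynomial.totalDegree]
  apply Finset.sup_le
  intro m hm
  have hne : coeff m (pderiv i f) ≠ 0 := mem_support_iff.1 hm
  rw [coeff_pderiv] at hne
  have hmem : m + Finsupp.single i 1 ∈ f.support := by
    rw [mem_support_iff]; intro h0; rw [h0, mul_zero] at hne; exact hne rfl
  have hle := MvPolynomial.le_totalDegree hmem
  rw [sum_add_single] at hle
  omega


section Field

variable {F : Type} [Field F] (p : ℕ) [CharP F p]

/-- the subalgebra generated by p-th powers of the first five variables and `X 5`. -/
def Sp (F : Type) [Field F] (p : ℕ) : Subalgebra F (MvPolynomial (Fin 6) F) :=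
  Algebra.adjoin F {X 0 ^ p, X 1 ^ p, X 2 ^ p, X 3 ^ p, X 4 ^ p, X 5}

def c2F (F : Type) [Field F] : MvPolynomial (Fin 6) F :=
  3 * X 0 * X 5 - 3 * X 1 * X 4 + X 2 ^ 2

def Radj (F : Type) [Field F] (p : ℕ) : Subalgebra F (MvPolynomial (Fin 6) F) :=
  Algebra.adjoin F {X 0 ^ p, X 1 ^ p, X 2 ^ p, X 3 ^ p, X 4 ^ p, X 5, c2F F}

lemma Sp_le_Radj : Sp F p ≤ Radj F p := by
  apply Algebra.adjoin_mono
  intro x hx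
  simp only [Set.mem_insert_iff, Set.mem_singleton_iff] at hx ⊢
  tauto

lemma c2F_mem_Radj : c2F F ∈ Radj F p :=
  Algebra.subset_adjoin (by simp)

lemma three_ne_zero' (hp3 : 3 < p) : (3 : F) ≠ 0 := by
  have : ((3 : ℕ) : F) ≠ 0 := by
    rw [Ne, CharP.cast_eq_zero_iff F p]
    intro hdvd
    have := Nat.le_of_dvd (by norm_num) hdvd
    omega
  simpa using this

lemma natCast_ne_zero_of_lt (hp : p.Prime) {k : ℕ} (h0 : 0 < k) (hk : k < p) : ((k : ℕ) : F) ≠ 0 := by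
  rw [Ne, CharP.cast_eq_zero_iff F p]
  intro hdvd
  have := Nat.le_of_dvd h0 hdvd
  omega

lemma mem_Sp_of_pderiv_eq_zero (f : MvPolynomial (Fin 6) F)
    (h : ∀ i : Fin 6, i ≠ 5 → pderiv i f = 0) : f ∈ Sp F p := by
  rw [← support_sum_monomial_coeff f]
  apply Subalgebra.sum_mem
  intro m hm
  rw [monomial_eq]
  apply Subalgebra.mul_mem
  · exact Subalgebra.algebraMap_mem _ _
  · rw [Finsupp.prod_fintype _ _ (fun i => pow_zero _)]
    apply Subalgebra.prod_mem
    intro i _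
    by_cases hi : i = 5
    · subst hi
      exact Subalgebra.pow_mem _ (Algebra.subset_adjoin (by simp)) _
    · obtain ⟨k, hk⟩ := dvd_exp_of_pderiv_eq_zero p i f (h i hi) m hm
      rw [hk, pow_mul]
      apply Subalgebra.pow_mem
      fin_cases i <;> simp_all <;> exact Algebra.subset_adjoin (by simp)

lemma pderiv_eq_zero_of_mem_Sp (f : MvPolynomial (Fin 6) F) (hf : f ∈ Sp F p)
    (i : Fin 6) (hi : i ≠ 5) : pderiv i f = 0 := by
  have hpz : ((p : ℕ) : MvPolynomial (Fin 6) F) = 0 := by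
    exact_mod_cast CharP.cast_eq_zero (MvPolynomial (Fin 6) F) p
  induction hf using Algebra.adjoin_induction with
  | mem x hx =>
    simp only [Set.mem_insert_iff, Set.mem_singleton_iff] at hx
    rcases hx with rfl | rfl | rfl | rfl | rfl | rfl
    case inr.inr.inr.inr.inr => exact pderiv_X_of_ne (Ne.symm hi)
    all_goals rw [pderiv_pow, hpz, zero_mul, zero_mul]
  | algebraMap r => exact pderiv_C
  | add x y hx hy ihx ihy => rw [map_add, ihx, ihy, add_zero]
  | mul x y hx hy ihx ihy => rw [pderiv_mul, ihx, ihy, zero_mul, mul_zero, add_zero]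


lemma c2F_pow_p_mem_Sp (hp : p.Prime) (hp3 : 3 < p) : (c2F F) ^ p ∈ Sp F p := by
  haveI : Fact p.Prime := ⟨hp⟩
  have hodd : Odd p := hp.odd_of_ne_two (by omega)
  rw [c2F, sub_eq_add_neg]
  rw [add_pow_char, add_pow_char]
  have h1 : (3 * X 0 * X 5 : MvPolynomial (Fin 6) F) ^ p = 3 ^ p * (X 0 ^ p * X 5 ^ p) := by
    rw [mul_pow, mul_pow]; ring
  have h2 : (-(3 * X 1 * X 4) : MvPolynomial (Fin 6) F) ^ p = -(3 ^ p * (X 1 ^ p * X 4 ^ p)) := by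
    rw [hodd.neg_pow, mul_pow, mul_pow]; ring
  have h3 : ((X 2 : MvPolynomial (Fin 6) F) ^ 2) ^ p = (X 2 ^ p) ^ 2 := by
    rw [← pow_mul, ← pow_mul, mul_comm]
  rw [h1, h2, h3]
  have h3p : (3 : MvPolynomial (Fin 6) F) ^ p ∈ Sp F p := by
    have : (3 : MvPolynomial (Fin 6) F) ^ p = algebraMap F _ (3 ^ p) := by
      rw [map_pow, map_ofNat]
    rw [this]; exact Subalgebra.algebraMap_mem _ _
  have g0 : (X 0 : MvPolynomial (Fin 6) F) ^ p ∈ Sp F p := Algebra.subset_adjoin (by simp)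
  have g1 : (X 1 : MvPolynomial (Fin 6) F) ^ p ∈ Sp F p := Algebra.subset_adjoin (by simp)
  have g2 : (X 2 : MvPolynomial (Fin 6) F) ^ p ∈ Sp F p := Algebra.subset_adjoin (by simp)
  have g4 : (X 4 : MvPolynomial (Fin 6) F) ^ p ∈ Sp F p := Algebra.subset_adjoin (by simp)
  have g5 : (X 5 : MvPolynomial (Fin 6) F) ∈ Sp F p := Algebra.subset_adjoin (by simp)
  apply Subalgebra.add_mem
  apply Subalgebra.add_mem
  · exact Subalgebra.mul_mem _ h3p (Subalgebra.mul_mem _ g0 (Subalgebra.pow_mem _ g5 _))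
  · exact Subalgebra.neg_mem _ (Subalgebra.mul_mem _ h3p (Subalgebra.mul_mem _ g1 g4))
  · exact Subalgebra.pow_mem _ g2 _

/-- representation as `∑ s b * c2^b` with `s b ∈ Sp`. -/
def HasRep (f : MvPolynomial (Fin 6) F) : Prop :=
  ∃ s : ℕ → MvPolynomial (Fin 6) F,
    (∀ b, s b ∈ Sp F p) ∧ f = ∑ b ∈ Finset.range p, s b * (c2F F) ^ b

lemma hasRep_of_mem_Sp (hp0 : 0 < p) {x : MvPolynomial (Fin 6) F} (hx : x ∈ Sp F p) :
    HasRep p x := by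
  refine ⟨fun b => if b = 0 then x else 0, fun b => by dsimp only; split <;> simp [hx, Subalgebra.zero_mem], ?_⟩
  rw [Finset.sum_eq_single 0 (by intro b _ hb; simp [hb]) (by intro h; simp at h; omega)]
  simp

lemma hasRep_add {x y : MvPolynomial (Fin 6) F} (hx : HasRep p x) (hy : HasRep p y) :
    HasRep p (x + y) := by
  obtain ⟨s, hs, rfl⟩ := hx
  obtain ⟨t, ht, rfl⟩ := hy
  exact ⟨fun b => s b + t b, fun b => Subalgebra.add_mem _ (hs b) (ht b), by
    rw [← Finset.sum_add_distrib]; apply Finset.sum_congr rfl; intros; ring⟩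

lemma hasRep_mul_mem_Sp {σ₀ x : MvPolynomial (Fin 6) F} (hσ : σ₀ ∈ Sp F p) (hx : HasRep p x) :
    HasRep p (σ₀ * x) := by
  obtain ⟨s, hs, rfl⟩ := hx
  exact ⟨fun b => σ₀ * s b, fun b => Subalgebra.mul_mem _ hσ (hs b), by
    rw [Finset.mul_sum]; apply Finset.sum_congr rfl; intros; ring⟩

lemma hasRep_c2F_pow (hp : p.Prime) (hp3 : 3 < p) : ∀ m : ℕ, HasRep p ((c2F F) ^ m) := by
  intro m
  induction m using Nat.strong_induction_on with
  | _ m ih =>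
    by_cases hm : m < p
    · refine ⟨fun b => if b = m then 1 else 0, fun b => by dsimp only; split <;> simp [Subalgebra.one_mem, Subalgebra.zero_mem], ?_⟩
      rw [Finset.sum_eq_single m (by intro b _ hb; simp [hb]) (by intro h; simp at h; omega)]
      simp
    · push_neg at hm
      have hm0 : m - p < m := by have := hp.pos; omega
      have : (c2F F) ^ m = (c2F F) ^ p * (c2F F) ^ (m - p) := by
        rw [← pow_add]; congr 1; omega
      rw [this]
      exact hasRep_mul_mem_Sp p (c2F_pow_p_mem_Sp p hp hp3) (ih _ hm0)

lemma hasRep_zero (hp0 : 0 < p) : HasRep p (0 : MvPolynomial (Fin 6) F) :=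
  hasRep_of_mem_Sp p hp0 (Subalgebra.zero_mem _)

lemma hasRep_sum {α : Type} (t : Finset α) (g : α → MvPolynomial (Fin 6) F) (hp0 : 0 < p)
    (h : ∀ a ∈ t, HasRep p (g a)) : HasRep p (∑ a ∈ t, g a) := by
  induction t using Finset.cons_induction with
  | empty => simpa using hasRep_zero p hp0
  | cons a s hnot ih =>
    rw [Finset.sum_cons]
    exact hasRep_add p (h _ (Finset.mem_cons_self _ _))
      (ih fun a ha => h a (Finset.mem_cons_of_mem ha))

lemma hasRep_mul (hp : p.Prime) (hp3 : 3 < p) {x y : MvPolynomial (Fin 6) F}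
    (hx : HasRep p x) (hy : HasRep p y) : HasRep p (x * y) := by
  obtain ⟨s, hs, rfl⟩ := hx
  obtain ⟨t, ht, rfl⟩ := hy
  rw [Finset.sum_mul_sum]
  apply hasRep_sum p _ _ hp.pos
  intro a _
  apply hasRep_sum p _ _ hp.pos
  intro b _
  have : s a * (c2F F) ^ a * (t b * (c2F F) ^ b) = s a * (t b * (c2F F) ^ (a + b)) := by
    rw [pow_add]; ring
  rw [this]
  exact hasRep_mul_mem_Sp p (hs a)
    (hasRep_mul_mem_Sp p (ht b) (hasRep_c2F_pow p hp hp3 (a + b)))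

lemma hasRep_of_mem_Radj (hp : p.Prime) (hp3 : 3 < p) {x : MvPolynomial (Fin 6) F}
    (hx : x ∈ Radj F p) : HasRep p x := by
  induction hx using Algebra.adjoin_induction with
  | mem x hx =>
    simp only [Set.mem_insert_iff, Set.mem_singleton_iff] at hx
    rcases hx with rfl | rfl | rfl | rfl | rfl | rfl | rfl
    case inr.inr.inr.inr.inr.inr =>
      simpa using hasRep_c2F_pow p hp hp3 1
    all_goals exact hasRep_of_mem_Sp p hp.pos (Algebra.subset_adjoin (by simp))
  | algebraMap r => exact hasRep_of_mem_Sp p hp.pos (Subalgebra.algebraMap_mem _ _)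
  | add x y hx hy ihx ihy => exact hasRep_add p ihx ihy
  | mul x y hx hy ihx ihy => exact hasRep_mul p hp hp3 ihx ihy


lemma pderiv_c2F_0 : pderiv (0 : Fin 6) (c2F F) = 3 * X 5 := by
  have h3C : (3 : MvPolynomial (Fin 6) F) = C 3 := (map_ofNat C 3).symm
  rw [c2F, h3C]
  simp only [map_add, map_sub, pderiv_mul, pderiv_pow, pderiv_C, pderiv_X_self,
    pderiv_X_of_ne (by decide : (1 : Fin 6) ≠ 0), pderiv_X_of_ne (by decide : (2 : Fin 6) ≠ 0), pderiv_X_of_ne (by decide : (4 : Fin 6) ≠ 0), pderiv_X_of_ne (by decide : (5 : Fin 6) ≠ 0)]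
  ring

lemma pderiv_c2F_1 : pderiv (1 : Fin 6) (c2F F) = -(3 * X 4) := by
  have h3C : (3 : MvPolynomial (Fin 6) F) = C 3 := (map_ofNat C 3).symm
  rw [c2F, h3C]
  simp only [map_add, map_sub, pderiv_mul, pderiv_pow, pderiv_C, pderiv_X_self,
    pderiv_X_of_ne (by decide : (0 : Fin 6) ≠ 1), pderiv_X_of_ne (by decide : (2 : Fin 6) ≠ 1), pderiv_X_of_ne (by decide : (4 : Fin 6) ≠ 1), pderiv_X_of_ne (by decide : (5 : Fin 6) ≠ 1)]
  ring

lemma pderiv_c2F_2 : pderiv (2 : Fin 6) (c2F F) = 2 * X 2 := by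
  have h3C : (3 : MvPolynomial (Fin 6) F) = C 3 := (map_ofNat C 3).symm
  rw [c2F, h3C]
  simp only [map_add, map_sub, pderiv_mul, pderiv_pow, pderiv_C, pderiv_X_self,
    pderiv_X_of_ne (by decide : (0 : Fin 6) ≠ 2), pderiv_X_of_ne (by decide : (1 : Fin 6) ≠ 2), pderiv_X_of_ne (by decide : (4 : Fin 6) ≠ 2), pderiv_X_of_ne (by decide : (5 : Fin 6) ≠ 2)]
  ring

lemma pderiv_c2F_3 : pderiv (3 : Fin 6) (c2F F) = 0 := by
  have h3C : (3 : MvPolynomial (Fin 6) F) = C 3 := (map_ofNat C 3).symm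
  rw [c2F, h3C]
  simp only [map_add, map_sub, pderiv_mul, pderiv_pow, pderiv_C, pderiv_X_self,
    pderiv_X_of_ne (by decide : (0 : Fin 6) ≠ 3), pderiv_X_of_ne (by decide : (1 : Fin 6) ≠ 3), pderiv_X_of_ne (by decide : (2 : Fin 6) ≠ 3), pderiv_X_of_ne (by decide : (4 : Fin 6) ≠ 3), pderiv_X_of_ne (by decide : (5 : Fin 6) ≠ 3)]
  ring

lemma pderiv_c2F_4 : pderiv (4 : Fin 6) (c2F F) = -(3 * X 1) := by
  have h3C : (3 : MvPolynomial (Fin 6) F) = C 3 := (map_ofNat C 3).symm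
  rw [c2F, h3C]
  simp only [map_add, map_sub, pderiv_mul, pderiv_pow, pderiv_C, pderiv_X_self,
    pderiv_X_of_ne (by decide : (0 : Fin 6) ≠ 4), pderiv_X_of_ne (by decide : (1 : Fin 6) ≠ 4), pderiv_X_of_ne (by decide : (2 : Fin 6) ≠ 4), pderiv_X_of_ne (by decide : (5 : Fin 6) ≠ 4)]
  ring

lemma pderiv_iterate_c2F_pow (k m : ℕ) :
    (pderiv (0 : Fin 6))^[k] ((c2F F) ^ (m + k)) =
      (((∏ j ∈ Finset.range k, (m + j + 1)) : ℕ) : MvPolynomial (Fin 6) F) *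
        ((3 * X 5) ^ k * (c2F F) ^ m) := by
  induction k with
  | zero => simp
  | succ k ih =>
    rw [Function.iterate_succ_apply]
    have hstep : pderiv (0 : Fin 6) ((c2F F) ^ (m + (k + 1))) =
        (((m + k + 1 : ℕ)) : MvPolynomial (Fin 6) F) * (3 * X 5) * (c2F F) ^ (m + k) := by
      rw [pderiv_pow, pderiv_c2F_0]
      have : m + (k + 1) - 1 = m + k := by omega
      rw [this]
      push_cast
      ring
    rw [hstep]
    have hconst : pderiv (0 : Fin 6)
        ((((m + k + 1 : ℕ)) : MvPolynomial (Fin 6) F) * (3 * X 5)) = 0 := by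
      rw [pderiv_mul, pderiv_mul]
      have h1 : pderiv (0 : Fin 6) (((m + k + 1 : ℕ)) : MvPolynomial (Fin 6) F) = 0 := by
        rw [show (((m + k + 1 : ℕ)) : MvPolynomial (Fin 6) F) = C ((m + k + 1 : ℕ) : F) from
          (map_natCast C _).symm]
        exact pderiv_C
      have h2 : pderiv (0 : Fin 6) (3 : MvPolynomial (Fin 6) F) = 0 := by
        rw [show (3 : MvPolynomial (Fin 6) F) = C 3 from (map_ofNat C 3).symm]
        exact pderiv_C
      rw [h1, h2, pderiv_X_of_ne (by decide)]
      ring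
    rw [pderiv_iterate_mul_left _ _ hconst, ih]
    rw [Finset.prod_range_succ]
    push_cast
    ring

/-- the system of PDEs cutting out the Poisson centre. -/
def Cond (f : MvPolynomial (Fin 6) F) : Prop :=
  pderiv 3 f = 0 ∧
  X 5 * pderiv 4 f = -(X 1 * pderiv 0 f) ∧
  3 * (X 5 * pderiv 2 f) = 2 * (X 2 * pderiv 0 f) ∧
  X 5 * pderiv 1 f = -(X 4 * pderiv 0 f)

lemma key_induction (hp : p.Prime) (hp3 : 3 < p) :
    ∀ (n : ℕ) (f : MvPolynomial (Fin 6) F), f.totalDegree ≤ n → Cond f → f ∈ Radj F p := by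
  have h3F : (3 : F) ≠ 0 := three_ne_zero' p hp3
  have hX5 : (X 5 : MvPolynomial (Fin 6) F) ≠ 0 := X_ne_zero _
  have h3M : (3 : MvPolynomial (Fin 6) F) ≠ 0 := by
    rw [show (3 : MvPolynomial (Fin 6) F) = C 3 from (map_ofNat C 3).symm]
    exact fun h => h3F (by simpa using (C_injective _ _) (h.trans (map_zero C).symm))
  intro n
  induction n using Nat.strong_induction_on with
  | _ n ih =>
    intro f hdeg hc
    obtain ⟨e3, e4, e2, e1⟩ := hc
    by_cases hg : pderiv (0 : Fin 6) f = 0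
    · -- base case: all partials vanish
      apply Sp_le_Radj p
      apply mem_Sp_of_pderiv_eq_zero p
      intro i hi
      have h4' : pderiv (4 : Fin 6) f = 0 := by
        rw [hg, mul_zero, neg_zero] at e4
        rcases mul_eq_zero.1 e4 with h' | h'
        · exact absurd h' hX5
        · exact h'
      have h2' : pderiv (2 : Fin 6) f = 0 := by
        rw [hg, mul_zero, mul_zero] at e2
        rcases mul_eq_zero.1 e2 with h' | h'
        · exact absurd h' h3M
        · rcases mul_eq_zero.1 h' with h'' | h''
          · exact absurd h'' hX5
          · exact h''
      have h1' : pderiv (1 : Fin 6) f = 0 := by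
        rw [hg, mul_zero, neg_zero] at e1
        rcases mul_eq_zero.1 e1 with h' | h'
        · exact absurd h' hX5
        · exact h'
      fin_cases i
      · exact hg
      · exact h1'
      · exact h2'
      · exact e3
      · exact h4'
      · exact absurd rfl hi
    · -- inductive step
      -- X 5 divides pderiv 0 f
      have pd3const : ∀ i : Fin 6, pderiv i (3 : MvPolynomial (Fin 6) F) = 0 := fun i => by
        rw [show (3 : MvPolynomial (Fin 6) F) = C 3 from (map_ofNat C 3).symm]; exact pderiv_C
      have pd2const : ∀ i : Fin 6, pderiv i (2 : MvPolynomial (Fin 6) F) = 0 := fun i => by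
        rw [show (2 : MvPolynomial (Fin 6) F) = C 2 from (map_ofNat C 2).symm]; exact pderiv_C
      have hdvd : (X 5 : MvPolynomial (Fin 6) F) ∣ pderiv 0 f := by
        apply X_dvd_of_coeff_zero
        intro m hm5
        have h := congrArg (coeff (Finsupp.single (4 : Fin 6) 1 + m)) e1
        rw [coeff_X_mul' ] at h
        have hns : (5 : Fin 6) ∉ (Finsupp.single (4 : Fin 6) 1 + m).support := by
          rw [Finsupp.mem_support_iff]
          simp [Finsupp.add_apply, Finsupp.single_eq_of_ne' (by decide : (4 : Fin 6) ≠ 5), hm5]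
        rw [if_neg hns, coeff_neg, coeff_X_mul] at h
        exact neg_eq_zero.mp h.symm
      obtain ⟨u, hu⟩ := hdvd
      have hCinv : (C (3⁻¹ : F) : MvPolynomial (Fin 6) F) ≠ 0 := by
        rw [Ne, MvPolynomial.C_eq_zero]
        exact inv_ne_zero h3F
      set w : MvPolynomial (Fin 6) F := C (3⁻¹ : F) * u with hw_def
      have hd0 : pderiv 0 f = 3 * (X 5 * w) := by
        rw [hu, hw_def]
        have h30 : (3 : MvPolynomial (Fin 6) F) * C (3⁻¹ : F) = 1 := by
          rw [show (3 : MvPolynomial (Fin 6) F) = C 3 from (map_ofNat C 3).symm, ← map_mul,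
            mul_inv_cancel₀ h3F, map_one]
        calc X 5 * u = (3 * C (3⁻¹ : F)) * (X 5 * u) := by rw [h30, one_mul]
          _ = 3 * (X 5 * (C (3⁻¹ : F) * u)) := by ring
      have hd1 : pderiv 1 f = -(3 * (X 4 * w)) := by
        apply mul_left_cancel₀ hX5
        rw [e1, hd0]; ring
      have hd2 : pderiv 2 f = 2 * (X 2 * w) := by
        rw [hd0] at e2
        apply mul_left_cancel₀ (mul_ne_zero h3M hX5)
        calc (3 * X 5) * pderiv 2 f = 3 * (X 5 * pderiv 2 f) := by ring
          _ = 2 * (X 2 * (3 * (X 5 * w))) := e2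
          _ = 3 * X 5 * (2 * (X 2 * w)) := by ring
      have hd4 : pderiv 4 f = -(3 * (X 1 * w)) := by
        rw [hd0] at e4
        apply mul_left_cancel₀ hX5
        rw [e4]; ring
      have hexp3 : ∀ (i j : Fin 6), j ≠ i → ∀ g : MvPolynomial (Fin 6) F,
          pderiv i (3 * (X j * g)) = 3 * (X j * pderiv i g) := by
        intro i j hij g
        rw [pderiv_mul, pderiv_mul, pderiv_X_of_ne hij, pd3const i]; ring
      have hcancel35 : ∀ a : MvPolynomial (Fin 6) F, 3 * (X 5 * a) = 0 → a = 0 := by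
        intro a ha
        rcases mul_eq_zero.1 ha with h' | h'
        · exact absurd h' h3M
        · rcases mul_eq_zero.1 h' with h'' | h''
          · exact absurd h'' hX5
          · exact h''
      -- conditions for w
      have cw3 : pderiv (3 : Fin 6) w = 0 := by
        have h := pderiv_pderiv_comm (3 : Fin 6) (0 : Fin 6) f
        rw [e3, map_zero, hd0, hexp3 3 5 (by decide)] at h
        exact hcancel35 _ h
      have cw4 : X 5 * pderiv 4 w = -(X 1 * pderiv 0 w) := by
        have h := pderiv_pderiv_comm (4 : Fin 6) (0 : Fin 6) f
        rw [hd0, hd4, hexp3 4 5 (by decide), map_neg, hexp3 0 1 (by decide)] at h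
        apply mul_left_cancel₀ h3M
        calc 3 * (X 5 * pderiv 4 w) = -(3 * (X 1 * pderiv 0 w)) := h
          _ = 3 * -(X 1 * pderiv 0 w) := by ring
      have cw2 : 3 * (X 5 * pderiv 2 w) = 2 * (X 2 * pderiv 0 w) := by
        have h := pderiv_pderiv_comm (2 : Fin 6) (0 : Fin 6) f
        rw [hd0, hd2, hexp3 2 5 (by decide)] at h
        rw [h, pderiv_mul, pderiv_mul, pderiv_X_of_ne (by decide : (2:Fin 6) ≠ 0), pd2const 0]
        ring
      have cw1 : X 5 * pderiv 1 w = -(X 4 * pderiv 0 w) := by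
        have h := pderiv_pderiv_comm (1 : Fin 6) (0 : Fin 6) f
        rw [hd0, hd1, hexp3 1 5 (by decide), map_neg, hexp3 0 4 (by decide)] at h
        apply mul_left_cancel₀ h3M
        calc 3 * (X 5 * pderiv 1 w) = -(3 * (X 4 * pderiv 0 w)) := h
          _ = 3 * -(X 4 * pderiv 0 w) := by ring
      -- degree decreases
      have hu0 : u ≠ 0 := fun h => hg (by rw [hu, h, mul_zero])
      have hdegw : w.totalDegree < n := by
        have h1 : w.totalDegree ≤ u.totalDegree := by
          refine le_trans (totalDegree_mul _ _) ?_
          simp [totalDegree_C]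
        have h2 : u.totalDegree < (X 5 * u).totalDegree := totalDegree_lt_X_mul 5 u hu0
        have h3 : (X 5 * u).totalDegree ≤ f.totalDegree := by
          rw [← hu]; exact totalDegree_pderiv_le 0 f
        omega
      have hwRadj : w ∈ Radj F p := ih w.totalDegree hdegw w le_rfl ⟨cw3, cw4, cw2, cw1⟩
      obtain ⟨s, hsS, hwrep⟩ := hasRep_of_mem_Radj p hp hp3 hwRadj
      set q1 : MvPolynomial (Fin 6) F := ∑ b ∈ Finset.range (p-1), s b * (c2F F) ^ b with hq1def
      set f0 : MvPolynomial (Fin 6) F :=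
        ∑ b ∈ Finset.range (p-1), C (((b+1 : ℕ) : F))⁻¹ * s b * (c2F F) ^ (b+1) with hf0def
      have hsplit : w = q1 + s (p-1) * (c2F F) ^ (p-1) := by
        rw [hwrep, hq1def, ← Finset.sum_range_succ]
        have : p - 1 + 1 = p := by have := hp.pos; omega
        rw [this]
      have hf0 : ∀ i : Fin 6, i ≠ 5 → pderiv i f0 = q1 * pderiv i (c2F F) := by
        intro i hi
        rw [hf0def, map_sum, hq1def, Finset.sum_mul]
        apply Finset.sum_congr rfl
        intro b hb
        have hb1 : b + 1 < p := by
          have := Finset.mem_range.1 hb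
          have := hp.pos
          omega
        rw [pderiv_mul, pderiv_mul, pderiv_C, pderiv_pow,
          pderiv_eq_zero_of_mem_Sp p (s b) (hsS b) i hi]
        have hcan : (C (((b+1 : ℕ) : F))⁻¹ : MvPolynomial (Fin 6) F) * ((b+1 : ℕ) : MvPolynomial (Fin 6) F) = 1 := by
          rw [show ((b+1 : ℕ) : MvPolynomial (Fin 6) F) = C (((b+1 : ℕ)) : F) from (map_natCast C _).symm,
            ← map_mul, inv_mul_cancel₀ (natCast_ne_zero_of_lt p hp (by omega) hb1), map_one]
        have hbb : b + 1 - 1 = b := rfl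
        rw [hbb]
        linear_combination (s b * (c2F F) ^ b * pderiv i (c2F F)) * hcan
      have hfi : ∀ i : Fin 6, i ≠ 5 → pderiv i f = pderiv i (c2F F) * w := by
        intro i hi
        fin_cases i
        · show pderiv (0:Fin 6) f = pderiv (0:Fin 6) (c2F F) * w
          rw [hd0, pderiv_c2F_0]; ring
        · show pderiv (1:Fin 6) f = pderiv (1:Fin 6) (c2F F) * w
          rw [hd1, pderiv_c2F_1]; ring
        · show pderiv (2:Fin 6) f = pderiv (2:Fin 6) (c2F F) * w
          rw [hd2, pderiv_c2F_2]; ring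
        · show pderiv (3:Fin 6) f = pderiv (3:Fin 6) (c2F F) * w
          rw [e3, pderiv_c2F_3]; ring
        · show pderiv (4:Fin 6) f = pderiv (4:Fin 6) (c2F F) * w
          rw [hd4, pderiv_c2F_4]; ring
        · exact absurd rfl hi
      have hqi : ∀ i : Fin 6, i ≠ 5 →
          pderiv i (f - f0) = pderiv i (c2F F) * (s (p-1) * (c2F F) ^ (p-1)) := by
        intro i hi
        rw [map_sub, hfi i hi, hf0 i hi, hsplit]
        ring
      -- kill the top coefficient
      have hs0 : s (p-1) = 0 := by
        have hiter : (pderiv (0 : Fin 6))^[p] (f - f0) = 0 :=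
          pderiv_iterate_char_eq_zero p hp.pos 0 _
        have hsucc : (pderiv (0 : Fin 6))^[p] (f - f0)
            = (pderiv (0 : Fin 6))^[p-1] (pderiv 0 (f - f0)) := by
          conv_lhs => rw [show p = (p-1)+1 by have := hp.pos; omega]
          rw [Function.iterate_succ_apply]
        have hq0 : pderiv (0 : Fin 6) (f - f0) = (3 * X 5 * s (p-1)) * (c2F F) ^ (p-1) := by
          rw [hqi 0 (by decide), pderiv_c2F_0]; ring
        have hconst0 : pderiv (0 : Fin 6) (3 * X 5 * s (p-1)) = 0 := by
          rw [pderiv_mul, pderiv_mul, pd3const, pderiv_X_of_ne (by decide : (5:Fin 6) ≠ 0),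
            pderiv_eq_zero_of_mem_Sp p (s (p-1)) (hsS (p-1)) 0 (by decide)]
          ring
        have hfinal : (0 : MvPolynomial (Fin 6) F) = (3 * X 5 * s (p-1)) *
            ((((∏ j ∈ Finset.range (p-1), (0 + j + 1)) : ℕ) : MvPolynomial (Fin 6) F) *
              ((3 * X 5) ^ (p-1) * (c2F F) ^ 0)) := by
          rw [← pderiv_iterate_c2F_pow, ← pderiv_iterate_mul_left _ _ hconst0,
            Nat.zero_add (p-1), ← hq0, ← hsucc, hiter]
        have hNne : ((((∏ j ∈ Finset.range (p-1), (0 + j + 1)) : ℕ)) : MvPolynomial (Fin 6) F) ≠ 0 := by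
          rw [show ((((∏ j ∈ Finset.range (p-1), (0 + j + 1)) : ℕ)) : MvPolynomial (Fin 6) F)
            = C ((((∏ j ∈ Finset.range (p-1), (0 + j + 1)) : ℕ)) : F) from (map_natCast C _).symm,
            Ne, MvPolynomial.C_eq_zero]
          push_cast
          apply Finset.prod_ne_zero_iff.2
          intro j hj
          have hjp : j + 1 < p := by have := Finset.mem_range.1 hj; have := hp.pos; omega
          have hne := natCast_ne_zero_of_lt (F := F) p hp (k := j + 1) (by omega) hjp
          intro hzero
          apply hne
          push_cast
          push_cast at hzero
          linear_combination hzero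
        rcases mul_eq_zero.1 hfinal.symm with h' | h'
        · rcases mul_eq_zero.1 h' with h'' | h''
          · rcases mul_eq_zero.1 h'' with h3 | h5
            · exact absurd h3 h3M
            · exact absurd h5 hX5
          · exact h''
        · exfalso
          rcases mul_eq_zero.1 h' with h'' | h''
          · exact hNne h''
          · rcases mul_eq_zero.1 h'' with h3 | h5
            · exact pow_ne_zero _ (mul_ne_zero h3M hX5) h3
            · simp at h5
      have hqS : f - f0 ∈ Sp F p := by
        apply mem_Sp_of_pderiv_eq_zero p
        intro i hi
        rw [hqi i hi, hs0]
        ring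
      have hf0R : f0 ∈ Radj F p := by
        rw [hf0def]
        apply Subalgebra.sum_mem
        intro b _
        refine Subalgebra.mul_mem _ (Subalgebra.mul_mem _ ?_ (Sp_le_Radj p (hsS b)))
          (Subalgebra.pow_mem _ (c2F_mem_Radj p) _)
        rw [show (C (((b+1 : ℕ) : F))⁻¹ : MvPolynomial (Fin 6) F)
          = algebraMap F _ (((b+1 : ℕ) : F))⁻¹ from rfl]
        exact Subalgebra.algebraMap_mem _ _
      have : f = (f - f0) + f0 := by ring
      rw [this]
      exact Subalgebra.add_mem _ (Sp_le_Radj p hqS) hf0R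

end Field

end G2Aux


section DvLemmas

variable {F : Type} [Field F] {L : Type} [LieRing L] [LieAlgebra F L]

lemma G2Aux.Dv_zero (b : Module.Basis (Fin 6) F L) : Dv b 0 = 0 := by
  apply MvPolynomial.derivation_ext
  intro j
  have e0 : Dv b 0 (X j) = ((b.repr ⁅(0 : L), b j⁆).sum fun k c =>
      (C c : MvPolynomial (Fin 6) F) * X k) := by
    unfold Dv; rw [MvPolynomial.mkDerivation_X]
  rw [e0]
  rw [zero_lie, map_zero, Finsupp.sum_zero_index, Derivation.zero_apply]

lemma G2Aux.Dv_add (b : Module.Basis (Fin 6) F L) (v w : L) : Dv b (v + w) = Dv b v + Dv b w := by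
  apply MvPolynomial.derivation_ext
  intro j
  have e0 : Dv b (v + w) (X j) = ((b.repr ⁅v + w, b j⁆).sum fun k c =>
      (C c : MvPolynomial (Fin 6) F) * X k) := by
    unfold Dv; rw [MvPolynomial.mkDerivation_X]
  rw [e0]
  rw [Derivation.add_apply]
  have e1 : Dv b v (X j) = ((b.repr ⁅v, b j⁆).sum fun k c =>
      (C c : MvPolynomial (Fin 6) F) * X k) := by
    unfold Dv; rw [MvPolynomial.mkDerivation_X]
  have e2 : Dv b w (X j) = ((b.repr ⁅w, b j⁆).sum fun k c =>
      (C c : MvPolynomial (Fin 6) F) * X k) := by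
    unfold Dv; rw [MvPolynomial.mkDerivation_X]
  rw [e1, e2]
  rw [add_lie, map_add]
  exact Finsupp.sum_add_index' (by intro k; rw [map_zero, zero_mul])
    (by intro k c1 c2; rw [map_add, add_mul])

lemma G2Aux.Dv_smul (b : Module.Basis (Fin 6) F L) (c : F) (v : L) : Dv b (c • v) = c • Dv b v := by
  apply MvPolynomial.derivation_ext
  intro j
  have e0 : Dv b (c • v) (X j) = ((b.repr ⁅c • v, b j⁆).sum fun k c =>
      (C c : MvPolynomial (Fin 6) F) * X k) := by
    unfold Dv; rw [MvPolynomial.mkDerivation_X]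
  rw [e0]
  rw [Derivation.smul_apply]
  have e1 : Dv b v (X j) = ((b.repr ⁅v, b j⁆).sum fun k c =>
      (C c : MvPolynomial (Fin 6) F) * X k) := by
    unfold Dv; rw [MvPolynomial.mkDerivation_X]
  rw [e1]
  rw [smul_lie, map_smul]
  rw [Finsupp.sum_smul_index' (by intro k; rw [map_zero, zero_mul])]
  rw [Finsupp.smul_sum]
  apply Finsupp.sum_congr
  intro k _
  rw [smul_eq_mul, map_mul, MvPolynomial.smul_eq_C_mul, mul_assoc]

lemma G2Aux.Dv_sum_apply (b : Module.Basis (Fin 6) F L) (t : Finset (Fin 6)) (g : Fin 6 → L)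
    (f : MvPolynomial (Fin 6) F) :
    Dv b (∑ i ∈ t, g i) f = ∑ i ∈ t, Dv b (g i) f := by
  induction t using Finset.cons_induction with
  | empty => simp [G2Aux.Dv_zero b]
  | cons a s hnot ih =>
    rw [Finset.sum_cons, Finset.sum_cons, G2Aux.Dv_add, Derivation.add_apply, ih]

end DvLemmas

/-- Theorem 1.1(a), first part: for `p > 3` prime, the Poisson center of `S(𝔫)` for the
nilradical `𝔫` of a Borel subalgebra of the simple Lie algebra of type `G₂` is the subalgebra
generated by `x₁ᵖ, …, x₅ᵖ, x₆` and `c₂`. -/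
theorem g2_nilradical_poissonCenter_eq (p : ℕ) [CharP F p] (hp : p.Prime) (hp3 : 3 < p)
    (b : Module.Basis (Fin 6) F L)
    (hbr1 : ⁅b 0, b 1⁆ = (2 : F) • b 2)
    (hbr2 : ⁅b 0, b 2⁆ = (3 : F) • b 4)
    (hbr3 : ⁅b 0, b 3⁆ = b 1)
    (hbr4 : ⁅b 1, b 2⁆ = (3 : F) • b 5)
    (hbr5 : ⁅b 3, b 4⁆ = -b 5)
    (hz : ∀ i j : Fin 6, i < j →
      (i, j) ∉ ({(0, 1), (0, 2), (0, 3), (1, 2), (3, 4)} : Set (Fin 6 × Fin 6)) → ⁅b i, b j⁆ = 0) :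
    poissonCenter b =
      Algebra.adjoin F {X 0 ^ p, X 1 ^ p, X 2 ^ p, X 3 ^ p, X 4 ^ p, X 5, g2c2 F} := by
  classical
  have hp0 : 0 < p := hp.pos
  have h3F : (3 : F) ≠ 0 := G2Aux.three_ne_zero' p hp3
  have hX5 : (X 5 : MvPolynomial (Fin 6) F) ≠ 0 := MvPolynomial.X_ne_zero _
  have h3M : (3 : MvPolynomial (Fin 6) F) ≠ 0 := by
    rw [show (3 : MvPolynomial (Fin 6) F) = C 3 from (map_ofNat C 3).symm, Ne,
      MvPolynomial.C_eq_zero]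
    exact h3F
  have hpz : ((p : ℕ) : MvPolynomial (Fin 6) F) = 0 := by
    exact_mod_cast CharP.cast_eq_zero (MvPolynomial (Fin 6) F) p
  have skew : ∀ x y : L, ⁅x, y⁆ = -⁅y, x⁆ := fun x y => (lie_skew x y).symm
  have hDX : ∀ (v : L) (j : Fin 6), Dv b v (X j) =
      ((b.repr ⁅v, b j⁆).sum fun k c => (C c : MvPolynomial (Fin 6) F) * X k) := by
    intro v j
    unfold Dv
    rw [MvPolynomial.mkDerivation_X]
  have hrz : (((b.repr (0 : L)).sum fun k c => (C c : MvPolynomial (Fin 6) F) * X k)) = 0 := by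
    rw [map_zero, Finsupp.sum_zero_index]
  have hrsm : ∀ (c : F) (k : Fin 6),
      (((b.repr (c • b k)).sum fun k c => (C c : MvPolynomial (Fin 6) F) * X k)) = C c * X k := by
    intro c k
    rw [map_smul, Module.Basis.repr_self, Finsupp.smul_single, smul_eq_mul, mul_one,
      Finsupp.sum_single_index (by rw [map_zero, zero_mul])]
  have hpdX : ∀ k j : Fin 6, pderiv k (X j : MvPolynomial (Fin 6) F) = if k = j then 1 else 0 := by
    intro k j
    by_cases h : k = j
    · subst h; simp
    · rw [pderiv_X_of_ne (Ne.symm h), if_neg h]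
  have hz04 : ⁅b 0, b 4⁆ = 0 := hz 0 4 (by decide) (by simp)
  have hz05 : ⁅b 0, b 5⁆ = 0 := hz 0 5 (by decide) (by simp)
  have hz13 : ⁅b 1, b 3⁆ = 0 := hz 1 3 (by decide) (by simp)
  have hz14 : ⁅b 1, b 4⁆ = 0 := hz 1 4 (by decide) (by simp)
  have hz15 : ⁅b 1, b 5⁆ = 0 := hz 1 5 (by decide) (by simp)
  have hz23 : ⁅b 2, b 3⁆ = 0 := hz 2 3 (by decide) (by simp)
  have hz24 : ⁅b 2, b 4⁆ = 0 := hz 2 4 (by decide) (by simp)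
  have hz25 : ⁅b 2, b 5⁆ = 0 := hz 2 5 (by decide) (by simp)
  have hz35 : ⁅b 3, b 5⁆ = 0 := hz 3 5 (by decide) (by simp)
  have hz45 : ⁅b 4, b 5⁆ = 0 := hz 4 5 (by decide) (by simp)
  have hB00 : ⁅b 0, b 0⁆ = 0 := lie_self (b 0)
  have hB01 : ⁅b 0, b 1⁆ = ((2:F)) • b 2 := hbr1
  have hB02 : ⁅b 0, b 2⁆ = ((3:F)) • b 4 := hbr2
  have hB03 : ⁅b 0, b 3⁆ = ((1:F)) • b 1 := by rw [hbr3, one_smul]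
  have hB04 : ⁅b 0, b 4⁆ = 0 := hz04
  have hB05 : ⁅b 0, b 5⁆ = 0 := hz05
  have hB10 : ⁅b 1, b 0⁆ = ((-2:F)) • b 2 := by rw [skew, hB01, ← neg_smul]
  have hB11 : ⁅b 1, b 1⁆ = 0 := lie_self (b 1)
  have hB12 : ⁅b 1, b 2⁆ = ((3:F)) • b 5 := hbr4
  have hB13 : ⁅b 1, b 3⁆ = 0 := hz13
  have hB14 : ⁅b 1, b 4⁆ = 0 := hz14
  have hB15 : ⁅b 1, b 5⁆ = 0 := hz15
  have hB20 : ⁅b 2, b 0⁆ = ((-3:F)) • b 4 := by rw [skew, hB02, ← neg_smul]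
  have hB21 : ⁅b 2, b 1⁆ = ((-3:F)) • b 5 := by rw [skew, hB12, ← neg_smul]
  have hB22 : ⁅b 2, b 2⁆ = 0 := lie_self (b 2)
  have hB23 : ⁅b 2, b 3⁆ = 0 := hz23
  have hB24 : ⁅b 2, b 4⁆ = 0 := hz24
  have hB25 : ⁅b 2, b 5⁆ = 0 := hz25
  have hB30 : ⁅b 3, b 0⁆ = ((-1:F)) • b 1 := by rw [skew, hB03, ← neg_smul]
  have hB31 : ⁅b 3, b 1⁆ = 0 := by rw [skew, hB13, neg_zero]
  have hB32 : ⁅b 3, b 2⁆ = 0 := by rw [skew, hB23, neg_zero]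
  have hB33 : ⁅b 3, b 3⁆ = 0 := lie_self (b 3)
  have hB34 : ⁅b 3, b 4⁆ = ((-1:F)) • b 5 := by rw [hbr5, ← neg_one_smul F]
  have hB35 : ⁅b 3, b 5⁆ = 0 := hz35
  have hB40 : ⁅b 4, b 0⁆ = 0 := by rw [skew, hB04, neg_zero]
  have hB41 : ⁅b 4, b 1⁆ = 0 := by rw [skew, hB14, neg_zero]
  have hB42 : ⁅b 4, b 2⁆ = 0 := by rw [skew, hB24, neg_zero]
  have hB43 : ⁅b 4, b 3⁆ = ((1:F)) • b 5 := by rw [skew, hB34, ← neg_smul]; norm_num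
  have hB44 : ⁅b 4, b 4⁆ = 0 := lie_self (b 4)
  have hB45 : ⁅b 4, b 5⁆ = 0 := hz45
  have hB50 : ⁅b 5, b 0⁆ = 0 := by rw [skew, hB05, neg_zero]
  have hB51 : ⁅b 5, b 1⁆ = 0 := by rw [skew, hB15, neg_zero]
  have hB52 : ⁅b 5, b 2⁆ = 0 := by rw [skew, hB25, neg_zero]
  have hB53 : ⁅b 5, b 3⁆ = 0 := by rw [skew, hB35, neg_zero]
  have hB54 : ⁅b 5, b 4⁆ = 0 := by rw [skew, hB45, neg_zero]
  have hB55 : ⁅b 5, b 5⁆ = 0 := lie_self (b 5)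
  have hD0 : Dv b (b 0) = ((C (2:F) * X (2 : Fin 6)) • pderiv (1 : Fin 6) + (C (3:F) * X (4 : Fin 6)) • pderiv (2 : Fin 6) + (C (1:F) * X (1 : Fin 6)) • pderiv (3 : Fin 6) : Derivation F (MvPolynomial (Fin 6) F) (MvPolynomial (Fin 6) F)) := by
    apply MvPolynomial.derivation_ext
    intro j
    fin_cases j
    · show Dv b (b 0) (X (0:Fin 6)) = _
      rw [hDX, hB00, hrz]
      simp [Derivation.add_apply, Derivation.smul_apply, smul_eq_mul, hpdX]
    · show Dv b (b 0) (X (1:Fin 6)) = _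
      rw [hDX, hB01, hrsm]
      simp [Derivation.add_apply, Derivation.smul_apply, smul_eq_mul, hpdX]
    · show Dv b (b 0) (X (2:Fin 6)) = _
      rw [hDX, hB02, hrsm]
      simp [Derivation.add_apply, Derivation.smul_apply, smul_eq_mul, hpdX]
    · show Dv b (b 0) (X (3:Fin 6)) = _
      rw [hDX, hB03, hrsm]
      simp [Derivation.add_apply, Derivation.smul_apply, smul_eq_mul, hpdX]
    · show Dv b (b 0) (X (4:Fin 6)) = _
      rw [hDX, hB04, hrz]
      simp [Derivation.add_apply, Derivation.smul_apply, smul_eq_mul, hpdX]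
    · show Dv b (b 0) (X (5:Fin 6)) = _
      rw [hDX, hB05, hrz]
      simp [Derivation.add_apply, Derivation.smul_apply, smul_eq_mul, hpdX]
  have hD1 : Dv b (b 1) = ((C (-2:F) * X (2 : Fin 6)) • pderiv (0 : Fin 6) + (C (3:F) * X (5 : Fin 6)) • pderiv (2 : Fin 6) : Derivation F (MvPolynomial (Fin 6) F) (MvPolynomial (Fin 6) F)) := by
    apply MvPolynomial.derivation_ext
    intro j
    fin_cases j
    · show Dv b (b 1) (X (0:Fin 6)) = _
      rw [hDX, hB10, hrsm]
      simp [Derivation.add_apply, Derivation.smul_apply, smul_eq_mul, hpdX]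
    · show Dv b (b 1) (X (1:Fin 6)) = _
      rw [hDX, hB11, hrz]
      simp [Derivation.add_apply, Derivation.smul_apply, smul_eq_mul, hpdX]
    · show Dv b (b 1) (X (2:Fin 6)) = _
      rw [hDX, hB12, hrsm]
      simp [Derivation.add_apply, Derivation.smul_apply, smul_eq_mul, hpdX]
    · show Dv b (b 1) (X (3:Fin 6)) = _
      rw [hDX, hB13, hrz]
      simp [Derivation.add_apply, Derivation.smul_apply, smul_eq_mul, hpdX]
    · show Dv b (b 1) (X (4:Fin 6)) = _
      rw [hDX, hB14, hrz]
      simp [Derivation.add_apply, Derivation.smul_apply, smul_eq_mul, hpdX]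
    · show Dv b (b 1) (X (5:Fin 6)) = _
      rw [hDX, hB15, hrz]
      simp [Derivation.add_apply, Derivation.smul_apply, smul_eq_mul, hpdX]
  have hD2 : Dv b (b 2) = ((C (-3:F) * X (4 : Fin 6)) • pderiv (0 : Fin 6) + (C (-3:F) * X (5 : Fin 6)) • pderiv (1 : Fin 6) : Derivation F (MvPolynomial (Fin 6) F) (MvPolynomial (Fin 6) F)) := by
    apply MvPolynomial.derivation_ext
    intro j
    fin_cases j
    · show Dv b (b 2) (X (0:Fin 6)) = _
      rw [hDX, hB20, hrsm]
      simp [Derivation.add_apply, Derivation.smul_apply, smul_eq_mul, hpdX]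
    · show Dv b (b 2) (X (1:Fin 6)) = _
      rw [hDX, hB21, hrsm]
      simp [Derivation.add_apply, Derivation.smul_apply, smul_eq_mul, hpdX]
    · show Dv b (b 2) (X (2:Fin 6)) = _
      rw [hDX, hB22, hrz]
      simp [Derivation.add_apply, Derivation.smul_apply, smul_eq_mul, hpdX]
    · show Dv b (b 2) (X (3:Fin 6)) = _
      rw [hDX, hB23, hrz]
      simp [Derivation.add_apply, Derivation.smul_apply, smul_eq_mul, hpdX]
    · show Dv b (b 2) (X (4:Fin 6)) = _
      rw [hDX, hB24, hrz]
      simp [Derivation.add_apply, Derivation.smul_apply, smul_eq_mul, hpdX]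
    · show Dv b (b 2) (X (5:Fin 6)) = _
      rw [hDX, hB25, hrz]
      simp [Derivation.add_apply, Derivation.smul_apply, smul_eq_mul, hpdX]
  have hD3 : Dv b (b 3) = ((C (-1:F) * X (1 : Fin 6)) • pderiv (0 : Fin 6) + (C (-1:F) * X (5 : Fin 6)) • pderiv (4 : Fin 6) : Derivation F (MvPolynomial (Fin 6) F) (MvPolynomial (Fin 6) F)) := by
    apply MvPolynomial.derivation_ext
    intro j
    fin_cases j
    · show Dv b (b 3) (X (0:Fin 6)) = _
      rw [hDX, hB30, hrsm]
      simp [Derivation.add_apply, Derivation.smul_apply, smul_eq_mul, hpdX]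
    · show Dv b (b 3) (X (1:Fin 6)) = _
      rw [hDX, hB31, hrz]
      simp [Derivation.add_apply, Derivation.smul_apply, smul_eq_mul, hpdX]
    · show Dv b (b 3) (X (2:Fin 6)) = _
      rw [hDX, hB32, hrz]
      simp [Derivation.add_apply, Derivation.smul_apply, smul_eq_mul, hpdX]
    · show Dv b (b 3) (X (3:Fin 6)) = _
      rw [hDX, hB33, hrz]
      simp [Derivation.add_apply, Derivation.smul_apply, smul_eq_mul, hpdX]
    · show Dv b (b 3) (X (4:Fin 6)) = _
      rw [hDX, hB34, hrsm]
      simp [Derivation.add_apply, Derivation.smul_apply, smul_eq_mul, hpdX]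
    · show Dv b (b 3) (X (5:Fin 6)) = _
      rw [hDX, hB35, hrz]
      simp [Derivation.add_apply, Derivation.smul_apply, smul_eq_mul, hpdX]
  have hD4 : Dv b (b 4) = ((C (1:F) * X (5 : Fin 6)) • pderiv (3 : Fin 6) : Derivation F (MvPolynomial (Fin 6) F) (MvPolynomial (Fin 6) F)) := by
    apply MvPolynomial.derivation_ext
    intro j
    fin_cases j
    · show Dv b (b 4) (X (0:Fin 6)) = _
      rw [hDX, hB40, hrz]
      simp [Derivation.add_apply, Derivation.smul_apply, smul_eq_mul, hpdX]
    · show Dv b (b 4) (X (1:Fin 6)) = _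
      rw [hDX, hB41, hrz]
      simp [Derivation.add_apply, Derivation.smul_apply, smul_eq_mul, hpdX]
    · show Dv b (b 4) (X (2:Fin 6)) = _
      rw [hDX, hB42, hrz]
      simp [Derivation.add_apply, Derivation.smul_apply, smul_eq_mul, hpdX]
    · show Dv b (b 4) (X (3:Fin 6)) = _
      rw [hDX, hB43, hrsm]
      simp [Derivation.add_apply, Derivation.smul_apply, smul_eq_mul, hpdX]
    · show Dv b (b 4) (X (4:Fin 6)) = _
      rw [hDX, hB44, hrz]
      simp [Derivation.add_apply, Derivation.smul_apply, smul_eq_mul, hpdX]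
    · show Dv b (b 4) (X (5:Fin 6)) = _
      rw [hDX, hB45, hrz]
      simp [Derivation.add_apply, Derivation.smul_apply, smul_eq_mul, hpdX]
  have hD5 : Dv b (b 5) = (0 : Derivation F (MvPolynomial (Fin 6) F) (MvPolynomial (Fin 6) F)) := by
    apply MvPolynomial.derivation_ext
    intro j
    fin_cases j
    · show Dv b (b 5) (X (0:Fin 6)) = _
      rw [hDX, hB50, hrz]
      simp [Derivation.add_apply, Derivation.smul_apply, smul_eq_mul, hpdX]
    · show Dv b (b 5) (X (1:Fin 6)) = _
      rw [hDX, hB51, hrz]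
      simp [Derivation.add_apply, Derivation.smul_apply, smul_eq_mul, hpdX]
    · show Dv b (b 5) (X (2:Fin 6)) = _
      rw [hDX, hB52, hrz]
      simp [Derivation.add_apply, Derivation.smul_apply, smul_eq_mul, hpdX]
    · show Dv b (b 5) (X (3:Fin 6)) = _
      rw [hDX, hB53, hrz]
      simp [Derivation.add_apply, Derivation.smul_apply, smul_eq_mul, hpdX]
    · show Dv b (b 5) (X (4:Fin 6)) = _
      rw [hDX, hB54, hrz]
      simp [Derivation.add_apply, Derivation.smul_apply, smul_eq_mul, hpdX]
    · show Dv b (b 5) (X (5:Fin 6)) = _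
      rw [hDX, hB55, hrz]
      simp [Derivation.add_apply, Derivation.smul_apply, smul_eq_mul, hpdX]

  -- membership in the Poisson centre is equivalent to the PDE system
  have hmem_iff : ∀ f : MvPolynomial (Fin 6) F, f ∈ poissonCenter b ↔ G2Aux.Cond f := by
    intro f
    have hC2 : (C (2:F) : MvPolynomial (Fin 6) F) = 2 := map_ofNat C 2
    have hC3 : (C (3:F) : MvPolynomial (Fin 6) F) = 3 := map_ofNat C 3
    have hC1 : (C (1:F) : MvPolynomial (Fin 6) F) = 1 := map_one C
    constructor
    · intro hf
      have h1 := hf (b 1)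
      have h2 := hf (b 2)
      have h3 := hf (b 3)
      have h4 := hf (b 4)
      rw [hD1, Derivation.add_apply, Derivation.smul_apply, Derivation.smul_apply,
        smul_eq_mul, smul_eq_mul, map_neg, hC2, hC3] at h1
      rw [hD2, Derivation.add_apply, Derivation.smul_apply, Derivation.smul_apply,
        smul_eq_mul, smul_eq_mul, map_neg, hC3] at h2
      rw [hD3, Derivation.add_apply, Derivation.smul_apply, Derivation.smul_apply,
        smul_eq_mul, smul_eq_mul, map_neg, hC1] at h3
      rw [hD4, Derivation.smul_apply, smul_eq_mul, hC1, one_mul] at h4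
      refine ⟨?_, ?_, ?_, ?_⟩
      · rcases mul_eq_zero.1 h4 with h' | h'
        · exact absurd h' hX5
        · exact h'
      · linear_combination -h3
      · linear_combination h1
      · apply mul_left_cancel₀ h3M
        linear_combination -h2
    · rintro ⟨c1, c2, c3, c4⟩
      intro v
      have hv : v = ∑ i : Fin 6, b.repr v i • b i := (Module.Basis.sum_repr b v).symm
      rw [hv, G2Aux.Dv_sum_apply]
      have hz0 : ∀ i : Fin 6, Dv b (b i) f = 0 := by
        intro i
        fin_cases i
        · show Dv b (b 0) f = 0
          rw [hD0, Derivation.add_apply, Derivation.add_apply, Derivation.smul_apply,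
            Derivation.smul_apply, Derivation.smul_apply, smul_eq_mul, smul_eq_mul,
            smul_eq_mul, hC2, hC3, hC1]
          apply mul_left_cancel₀ hX5
          rw [mul_zero]
          linear_combination (2 * X 2) * c4 + (X 4) * c3 + (X 1 * X 5) * c1
        · show Dv b (b 1) f = 0
          rw [hD1, Derivation.add_apply, Derivation.smul_apply, Derivation.smul_apply,
            smul_eq_mul, smul_eq_mul, map_neg, hC2, hC3]
          linear_combination c3
        · show Dv b (b 2) f = 0
          rw [hD2, Derivation.add_apply, Derivation.smul_apply, Derivation.smul_apply,
            smul_eq_mul, smul_eq_mul, map_neg, hC3]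
          linear_combination (-3 : MvPolynomial (Fin 6) F) * c4
        · show Dv b (b 3) f = 0
          rw [hD3, Derivation.add_apply, Derivation.smul_apply, Derivation.smul_apply,
            smul_eq_mul, smul_eq_mul, map_neg, hC1]
          linear_combination -c2
        · show Dv b (b 4) f = 0
          rw [hD4, Derivation.smul_apply, smul_eq_mul, hC1, one_mul, c1, mul_zero]
        · show Dv b (b 5) f = 0
          rw [hD5, Derivation.zero_apply]
      have : ∀ i : Fin 6, Dv b (b.repr v i • b i) f = 0 := by
        intro i
        rw [G2Aux.Dv_smul, Derivation.smul_apply, hz0 i, smul_zero]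
      simp only [this, Finset.sum_const_zero]
  -- now identify the two subalgebras
  have hRadj : Algebra.adjoin F {X 0 ^ p, X 1 ^ p, X 2 ^ p, X 3 ^ p, X 4 ^ p, X 5, g2c2 F}
      = G2Aux.Radj F p := rfl
  rw [hRadj]
  apply le_antisymm
  · intro f hf
    exact G2Aux.key_induction p hp hp3 f.totalDegree f le_rfl ((hmem_iff f).1 hf)
  · apply Algebra.adjoin_le
    intro x hx
    have hppow : ∀ k i : Fin 6, pderiv i ((X k : MvPolynomial (Fin 6) F) ^ p) = 0 := by
      intro k i
      rw [pderiv_pow, hpz, zero_mul, zero_mul]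
    simp only [Set.mem_insert_iff, Set.mem_singleton_iff] at hx
    rcases hx with rfl | rfl | rfl | rfl | rfl | rfl | rfl
    · exact (hmem_iff _).2 ⟨hppow 0 3, by rw [hppow, hppow]; ring, by rw [hppow, hppow]; ring,
        by rw [hppow, hppow]; ring⟩
    · exact (hmem_iff _).2 ⟨hppow 1 3, by rw [hppow, hppow]; ring, by rw [hppow, hppow]; ring,
        by rw [hppow, hppow]; ring⟩
    · exact (hmem_iff _).2 ⟨hppow 2 3, by rw [hppow, hppow]; ring, by rw [hppow, hppow]; ring,
        by rw [hppow, hppow]; ring⟩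
    · exact (hmem_iff _).2 ⟨hppow 3 3, by rw [hppow, hppow]; ring, by rw [hppow, hppow]; ring,
        by rw [hppow, hppow]; ring⟩
    · exact (hmem_iff _).2 ⟨hppow 4 3, by rw [hppow, hppow]; ring, by rw [hppow, hppow]; ring,
        by rw [hppow, hppow]; ring⟩
    · refine (hmem_iff _).2 ⟨?_, ?_, ?_, ?_⟩
      · exact pderiv_X_of_ne (by decide)
      · rw [pderiv_X_of_ne (by decide : (5:Fin 6) ≠ 4), pderiv_X_of_ne (by decide : (5:Fin 6) ≠ 0)]
        ring
      · rw [pderiv_X_of_ne (by decide : (5:Fin 6) ≠ 2), pderiv_X_of_ne (by decide : (5:Fin 6) ≠ 0)]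
        ring
      · rw [pderiv_X_of_ne (by decide : (5:Fin 6) ≠ 1), pderiv_X_of_ne (by decide : (5:Fin 6) ≠ 0)]
        ring
    · refine (hmem_iff _).2 ⟨?_, ?_, ?_, ?_⟩
      · exact G2Aux.pderiv_c2F_3
      · rw [G2Aux.pderiv_c2F_4, G2Aux.pderiv_c2F_0]; ring
      · rw [G2Aux.pderiv_c2F_2, G2Aux.pderiv_c2F_0]; ring
      · rw [G2Aux.pderiv_c2F_1, G2Aux.pderiv_c2F_0]; ring
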